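/- Assume ñ > 2 and fix a > 0. For every ε > 0 there exists A > 0 such that: for every α ≥ A and every rising radial arc (u, a, τ) with slope α, one has τ ≤ a + ε. (This is the uniform version of: τ(α) → a as α → +∞.) -/

import Mathlib

open Real Set

/-- `P⁺[u](r)`: the Pucci maximal operator `𝓜⁺_{λ,Λ}` evaluated on the Hessian of the
radial function `v(x) = u(|x|)`, expressed through `u'` and `u''`. -/
noncomputable def Pp (n : ℕ) (lam Lam : ℝ) (u' u'' : ℝ → ℝ) (r : ℝ) : ℝ :=
  Lam * max (u'' r) 0 + lam * min (u'' r) 0 +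
    ((n : ℝ) - 1) * (Lam * max (u' r / r) 0 + lam * min (u' r / r) 0)

/-- `P⁻[u](r)`: the Pucci minimal operator `𝓜⁻_{λ,Λ}` evaluated on the Hessian of the
radial function `v(x) = u(|x|)`. -/
noncomputable def Pm (n : ℕ) (lam Lam : ℝ) (u' u'' : ℝ → ℝ) (r : ℝ) : ℝ :=
  lam * max (u'' r) 0 + Lam * min (u'' r) 0 +
    ((n : ℝ) - 1) * (lam * max (u' r / r) 0 + Lam * min (u' r / r) 0)

/-- `u` satisfies the Pucci differential inequalities at `r`:
`−P⁺[u](r) ≤ |u(r)|^{p−1}u(r) ≤ −P⁻[u](r)`. -/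
def PucciIneq (n : ℕ) (lam Lam p : ℝ) (u u' u'' : ℝ → ℝ) (r : ℝ) : Prop :=
  -Pp n lam Lam u' u'' r ≤ |u r| ^ (p - 1) * u r ∧
    |u r| ^ (p - 1) * u r ≤ -Pm n lam Lam u' u'' r

/-- A rising radial arc with slope `α`: `u ∈ C²([a,τ])`, `u(a) = 0`, `u'(a) = α > 0`,
`u > 0` on `(a,τ]`, `u' > 0` on `[a,τ)`, `u'(τ) = 0`, and `u` satisfies the Pucci
differential inequalities on `(a,τ)`. -/
def RisingArc (n : ℕ) (lam Lam p : ℝ) (u u' u'' : ℝ → ℝ) (a τ α : ℝ) : Prop :=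
  0 < a ∧ a < τ ∧ 0 < α ∧
  (∀ r ∈ Set.Icc a τ, HasDerivAt u (u' r) r) ∧
  (∀ r ∈ Set.Icc a τ, HasDerivAt u' (u'' r) r) ∧
  ContinuousOn u'' (Set.Icc a τ) ∧
  u a = 0 ∧ u' a = α ∧
  (∀ r ∈ Set.Ioc a τ, 0 < u r) ∧
  (∀ r ∈ Set.Ico a τ, 0 < u' r) ∧
  u' τ = 0 ∧
  (∀ r ∈ Set.Ioo a τ, PucciIneq n lam Lam p u u' u'' r)


lemma aux_antitone {f : ℝ → ℝ} {s t : ℝ}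
    (hc : ContinuousOn f (Icc s t))
    (hd : ∀ x ∈ Ioo s t, ∃ d, d ≤ 0 ∧ HasDerivAt f d x) : AntitoneOn f (Icc s t) := by
  apply antitoneOn_of_deriv_nonpos (convex_Icc s t) hc
  · rw [interior_Icc]
    intro x hx
    obtain ⟨d, _, hdd⟩ := hd x hx
    exact hdd.differentiableAt.differentiableWithinAt
  · rw [interior_Icc]
    intro x hx
    obtain ⟨d, hd0, hdd⟩ := hd x hx
    rw [hdd.deriv]; exact hd0

lemma aux_monotone {f : ℝ → ℝ} {s t : ℝ}
    (hc : ContinuousOn f (Icc s t))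
    (hd : ∀ x ∈ Ioo s t, ∃ d, 0 ≤ d ∧ HasDerivAt f d x) : MonotoneOn f (Icc s t) := by
  apply monotoneOn_of_deriv_nonneg (convex_Icc s t) hc
  · rw [interior_Icc]
    intro x hx
    obtain ⟨d, _, hdd⟩ := hd x hx
    exact hdd.differentiableAt.differentiableWithinAt
  · rw [interior_Icc]
    intro x hx
    obtain ⟨d, hd0, hdd⟩ := hd x hx
    rw [hdd.deriv]; exact hd0

lemma pucci_consequence (n : ℕ) (hn : 2 ≤ n) {lam Lam p : ℝ} (hlam : 0 < lam) (hlL : lam ≤ Lam)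
    {u u' u'' : ℝ → ℝ} {r : ℝ} (hr : 0 < r) (hur : 0 < u r) (hu'r : 0 < u' r)
    (hP : PucciIneq n lam Lam p u u' u'' r) :
    u'' r ≤ -(u r ^ p / Lam) ∧
      -(u r ^ p / lam) - ((n : ℝ) - 1) * Lam / lam * (u' r / r) ≤ u'' r := by
  have hLam : 0 < Lam := lt_of_lt_of_le hlam hlL
  have hn1 : (1:ℝ) ≤ (n:ℝ) - 1 := by
    have : (2:ℝ) ≤ (n:ℝ) := by exact_mod_cast hn
    linarith
  have hq : 0 < u' r / r := div_pos hu'r hr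
  have hB : |u r| ^ (p - 1) * u r = u r ^ p := by
    rw [abs_of_pos hur]
    nth_rewrite 2 [show u r = u r ^ (1:ℝ) by rw [Real.rpow_one]]
    rw [← Real.rpow_add hur]; norm_num
  obtain ⟨h1, h2⟩ := hP
  rw [hB] at h1 h2
  have hBp : 0 < u r ^ p := Real.rpow_pos_of_pos hur p
  have hmaxq : max (u' r / r) 0 = u' r / r := max_eq_left hq.le
  have hminq : min (u' r / r) 0 = 0 := min_eq_right hq.le
  have hs : u'' r < 0 := by
    by_contra hcon
    push_neg at hcon
    have hPm : Pm n lam Lam u' u'' r = lam * u'' r + ((n:ℝ)-1) * (lam * (u' r / r)) := by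
      unfold Pm
      rw [max_eq_left hcon, min_eq_right hcon, hmaxq, hminq]; ring
    have : 0 ≤ Pm n lam Lam u' u'' r := by
      rw [hPm]; positivity
    linarith
  have hPm : Pm n lam Lam u' u'' r = Lam * u'' r + ((n:ℝ)-1) * (lam * (u' r / r)) := by
    unfold Pm
    rw [max_eq_right hs.le, min_eq_left hs.le, hmaxq, hminq]; ring
  have hPp : Pp n lam Lam u' u'' r = lam * u'' r + ((n:ℝ)-1) * (Lam * (u' r / r)) := by
    unfold Pp
    rw [max_eq_right hs.le, min_eq_left hs.le, hmaxq, hminq]; ring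
  rw [hPm] at h2; rw [hPp] at h1
  have hq0 : (0:ℝ) ≤ ((n:ℝ)-1) * (lam * (u' r / r)) := by positivity
  constructor
  · rw [show -(u r ^ p / Lam) = -(u r ^ p) / Lam from by ring, le_div_iff₀ hLam]
    linarith
  · have h3 : (-(u r ^ p) - ((n:ℝ)-1) * Lam * (u' r / r)) / lam ≤ u'' r := by
      rw [div_le_iff₀ hlam]; linarith
    have heq : -(u r ^ p / lam) - ((n:ℝ)-1)*Lam/lam*(u' r/r)
        = (-(u r ^ p) - ((n:ℝ)-1) * Lam * (u' r / r)) / lam := by ring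
    rw [heq]; exact h3

set_option maxHeartbeats 2000000 in
/-- Lemma 3.1 (ii) (paper), uniform version: `τ(α) → a` as `α → +∞`. -/
theorem rising_arc_peak_location_tendsto_a
    (n : ℕ) (hn : 2 ≤ n) (lam Lam p ntil : ℝ) (hlam : 0 < lam) (hlL : lam ≤ Lam) (hp : 1 < p)
    (hnt : ntil = Lam / lam * ((n : ℝ) - 1) + 1) (hnt2 : 2 < ntil)
    (a : ℝ) (ha : 0 < a) (ε : ℝ) (hε : 0 < ε) :
    ∃ A : ℝ, 0 < A ∧ ∀ α : ℝ, A ≤ α → ∀ (u u' u'' : ℝ → ℝ) (τ : ℝ),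
      RisingArc n lam Lam p u u' u'' a τ α → τ ≤ a + ε := by
  have hLam : 0 < Lam := lt_of_lt_of_le hlam hlL
  have hp0 : 0 < p := by linarith
  have hp1 : (0:ℝ) < p + 1 := by linarith
  have hp1ne : p + 1 ≠ 0 := ne_of_gt hp1
  have hpm1 : 0 < p - 1 := by linarith
  have hn1 : (1:ℝ) ≤ (n:ℝ) - 1 := by
    have : (2:ℝ) ≤ (n:ℝ) := by exact_mod_cast hn
    linarith
  set Q : ℝ := ((n:ℝ) - 1) * Lam / lam with hQdef
  have hQpos : 0 < Q := div_pos (mul_pos (by linarith) hLam) hlam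
  set C : ℝ := 2 * Q / a with hCdef
  have hC0 : 0 < C := by positivity
  set θ : ℝ := Real.exp (-(C * ε)) / 2 with hθdef
  have hθ0 : 0 < θ := by positivity
  set c : ℝ := 3 / 8 * ((p + 1) * lam) * Real.exp (-(C * ε) / 2) with hcdef
  have hc0 : 0 < c := by positivity
  set K : ℝ := 2 * Lam * θ / ε with hKdef
  have hK0 : 0 < K := by positivity
  set K₁ : ℝ := (p + 1) * Lam / (θ ^ p * (ε / 2) ^ (p + 1)) with hK1def
  have hden1 : 0 < θ ^ p * (ε / 2) ^ (p + 1) :=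
    mul_pos (Real.rpow_pos_of_pos hθ0 p) (Real.rpow_pos_of_pos (by linarith) _)
  have hK10 : 0 < K₁ := div_pos (by positivity) hden1
  set K₂ : ℝ := K ^ (p + 1) / c ^ p with hK2def
  have hK20 : 0 < K₂ := div_pos (Real.rpow_pos_of_pos hK0 _) (Real.rpow_pos_of_pos hc0 _)
  refine ⟨max 1 (max K₁ K₂ ^ (p - 1)⁻¹), lt_of_lt_of_le one_pos (le_max_left _ _), ?_⟩
  intro α hα u u' u'' τ harc
  obtain ⟨-, haτ, hα0, hu, hu', hu''c, hua, hu'a, hupos, hu'pos, hu'τ, hpucci⟩ := harc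
  by_contra hcon
  push_neg at hcon
  set b : ℝ := a + ε with hbdef
  set m : ℝ := a + ε / 2 with hmdef
  have hab : a < b := by rw [hbdef]; linarith
  have ham : a < m := by rw [hmdef]; linarith
  have hmb : m < b := by rw [hmdef, hbdef]; linarith
  have hbτ : b < τ := hcon
  clear_value b m
  have hsub : Icc a b ⊆ Icc a τ := Icc_subset_Icc_right (le_of_lt hbτ)
  have hu'posb : ∀ x ∈ Icc a b, 0 < u' x := fun x hx => hu'pos x ⟨hx.1, lt_of_le_of_lt hx.2 hbτ⟩
  have huposb : ∀ x ∈ Ioc a b, 0 < u x := fun x hx => hupos x ⟨hx.1, le_trans hx.2 (le_of_lt hbτ)⟩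
  have hkey : ∀ x ∈ Ioo a b, u'' x ≤ -(u x ^ p / Lam) ∧
      -(u x ^ p / lam) - Q * (u' x / x) ≤ u'' x := by
    intro x hx
    have hx' : x ∈ Ioo a τ := ⟨hx.1, lt_trans hx.2 hbτ⟩
    exact pucci_consequence n hn hlam hlL (lt_trans ha hx.1)
      (hupos x ⟨hx.1, le_of_lt hx'.2⟩) (hu'pos x ⟨le_of_lt hx.1, hx'.2⟩) (hpucci x hx')
  clear_value Q C θ c K K₁ K₂
  have hcu : ContinuousOn u (Icc a b) := fun x hx => ((hu x (hsub hx)).continuousAt).continuousWithinAt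
  have hcu' : ContinuousOn u' (Icc a b) := fun x hx => ((hu' x (hsub hx)).continuousAt).continuousWithinAt
  have hu'anti : AntitoneOn u' (Icc a b) := by
    apply aux_antitone hcu'
    intro x hx
    refine ⟨u'' x, ?_, hu' x (hsub ⟨le_of_lt hx.1, le_of_lt hx.2⟩)⟩
    have h1 := (hkey x hx).1
    have h2 : 0 < u x ^ p := Real.rpow_pos_of_pos (huposb x ⟨hx.1, le_of_lt hx.2⟩) p
    have h3 : -(u x ^ p / Lam) ≤ 0 := neg_nonpos.2 (by positivity)
    linarith
  have humono : MonotoneOn u (Icc a b) :=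
    aux_monotone hcu (fun x hx => ⟨u' x, (hu'posb x ⟨le_of_lt hx.1, le_of_lt hx.2⟩).le,
      hu x (hsub ⟨le_of_lt hx.1, le_of_lt hx.2⟩)⟩)
  have haIb : a ∈ Icc a b := ⟨le_refl a, le_of_lt hab⟩
  have hmIb : m ∈ Icc a b := ⟨le_of_lt ham, le_of_lt hmb⟩
  have hbIb : b ∈ Icc a b := ⟨le_of_lt hab, le_refl b⟩
  have haIam : a ∈ Icc a m := ⟨le_refl a, le_of_lt ham⟩
  have hmIam : m ∈ Icc a m := ⟨le_of_lt ham, le_refl m⟩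
  have hmImb : m ∈ Icc m b := ⟨le_refl m, le_of_lt hmb⟩
  have hbImb : b ∈ Icc m b := ⟨le_of_lt hmb, le_refl b⟩
  have hu'm_pos : 0 < u' m := hu'posb m hmIb
  have hu'b_pos : 0 < u' b := hu'posb b hbIb
  have hu'm_le : u' m ≤ α := by
    have := hu'anti haIb hmIb (le_of_lt ham)
    rwa [hu'a] at this
  have hum_pos : 0 < u m := huposb m ⟨ham, le_of_lt hmb⟩
  have hmax0 : 0 ≤ max K₁ K₂ := le_trans hK10.le (le_max_left _ _)
  have hαpow : max K₁ K₂ ≤ α ^ (p - 1) := by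
    have h2 : max K₁ K₂ ^ (p - 1)⁻¹ ≤ α := le_trans (le_max_right _ _) hα
    have h3 := Real.rpow_le_rpow (Real.rpow_nonneg hmax0 _) h2 (le_of_lt hpm1)
    rwa [Real.rpow_inv_rpow hmax0 (ne_of_gt hpm1)] at h3
  have hαp : α ^ p = α ^ (p - 1) * α := by
    conv_lhs => rw [show p = p - 1 + 1 by ring]
    rw [Real.rpow_add hα0, Real.rpow_one]
  have hsubm : Icc a m ⊆ Icc a b := Icc_subset_Icc_right (le_of_lt hmb)
  have hsubmb : Icc m b ⊆ Icc a b := Icc_subset_Icc_left (le_of_lt ham)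
  rcases le_or_gt (u' m) (θ * α) with hcase | hcase
  · -- Case B : u' m ≤ θ * α
    obtain ⟨F, hFdef⟩ : ∃ F : ℝ → ℝ,
        F = fun r => u' r * u' r / 2 + u r ^ (p + 1) / ((p + 1) * lam) := ⟨_, rfl⟩
    obtain ⟨G, hGdef⟩ : ∃ G : ℝ → ℝ, G = fun r => F r * Real.exp (C * (r - a)) := ⟨_, rfl⟩
    have hGmono : MonotoneOn G (Icc a m) := by
      apply aux_monotone
      all_goals rw [hGdef, hFdef]
      · apply ContinuousOn.mul
        · apply ContinuousOn.add
          · exact (((hcu'.mono hsubm)).mul ((hcu'.mono hsubm))).div_const 2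
          · exact ((hcu.mono hsubm).rpow_const (fun x hx => Or.inr (le_of_lt hp1))).div_const _
        · exact (Real.continuous_exp.comp
            (continuous_const.mul (continuous_id.sub continuous_const))).continuousOn
      · intro x hx
        have hxb : x ∈ Ioo a b := ⟨hx.1, lt_trans hx.2 hmb⟩
        have hxIb : x ∈ Icc a b := ⟨le_of_lt hx.1, le_of_lt hxb.2⟩
        have hux : 0 < u x := huposb x ⟨hx.1, hxIb.2⟩
        have hu'x : 0 < u' x := hu'posb x hxIb
        have hxpos : 0 < x := lt_trans ha hx.1
        have hdu2 : HasDerivAt (fun r => u' r * u' r / 2)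
            ((u'' x * u' x + u' x * u'' x) / 2) x :=
          ((hu' x (hsub hxIb)).mul (hu' x (hsub hxIb))).div_const 2
        have hdup : HasDerivAt (fun r => u r ^ (p + 1) / ((p + 1) * lam))
            ((p + 1) * u x ^ (p + 1 - 1) * u' x / ((p + 1) * lam)) x := by
          have h := (Real.hasDerivAt_rpow_const (p := p + 1)
            (Or.inl (ne_of_gt hux))).comp x (hu x (hsub hxIb))
          exact h.div_const _
        have hdE : HasDerivAt (fun r => Real.exp (C * (r - a)))
            (Real.exp (C * (x - a)) * C) x := by
          have h1 : HasDerivAt (fun r : ℝ => C * (r - a)) (C * 1) x :=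
            ((hasDerivAt_id x).sub_const a).const_mul C
          have h2 := (Real.hasDerivAt_exp (C * (x - a))).comp x h1
          simpa [Function.comp_def] using h2
        have hdG := (hdu2.add hdup).mul hdE
        refine ⟨_, ?_, hdG⟩
        clear hdG
        rw [show p + 1 - 1 = p from by ring]
        have hEx : 0 < Real.exp (C * (x - a)) := Real.exp_pos _
        have hk2 := (hkey x hxb).2
        have hstep : -(u x ^ p) * u' x / lam - Q * (u' x * u' x / x) ≤ u' x * u'' x := by
          have h5 := mul_le_mul_of_nonneg_left hk2 (le_of_lt hu'x)
          calc -(u x ^ p) * u' x / lam - Q * (u' x * u' x / x)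
              = u' x * (-(u x ^ p / lam) - Q * (u' x / x)) := by ring
            _ ≤ u' x * u'' x := h5
        have h1x : 1 / x ≤ 1 / a := by
          apply one_div_le_one_div_of_le ha (le_of_lt hx.1)
        have hQu : 0 ≤ Q * (u' x * u' x) := mul_nonneg hQpos.le (by positivity)
        have hcancel : (p + 1) * u x ^ p * u' x / ((p + 1) * lam) = u x ^ p * u' x / lam := by
          rw [mul_assoc, mul_div_mul_left _ _ hp1ne]
        rw [hcancel]
        have hCF : C * (u' x * u' x / 2)
            ≤ C * (u' x * u' x / 2 + u x ^ (p + 1) / ((p + 1) * lam)) := by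
          apply mul_le_mul_of_nonneg_left _ (le_of_lt hC0)
          have h6 : 0 ≤ u x ^ (p + 1) / ((p + 1) * lam) := by positivity
          linarith
        have key2 : Q * (u' x * u' x / x) ≤ C * (u' x * u' x / 2) := by
          have e1 : C * (u' x * u' x / 2) = Q * (u' x * u' x) * (1 / a) := by rw [hCdef]; ring
          have e2 : Q * (u' x * u' x / x) = Q * (u' x * u' x) * (1 / x) := by ring
          rw [e1, e2]
          exact mul_le_mul_of_nonneg_left h1x hQu
        have hinner : 0 ≤ u' x * u'' x + u x ^ p * u' x / lam
            + C * (u' x * u' x / 2 + u x ^ (p + 1) / ((p + 1) * lam)) := by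
          have e3 : -(u x ^ p) * u' x / lam = -(u x ^ p * u' x / lam) := by ring
          rw [e3] at hstep
          linarith
        have e4 : ((u'' x * u' x + u' x * u'' x) / 2 + u x ^ p * u' x / lam) *
              Real.exp (C * (x - a))
              + (u' x * u' x / 2 + u x ^ (p + 1) / ((p + 1) * lam)) *
                (Real.exp (C * (x - a)) * C)
            = Real.exp (C * (x - a)) * (u' x * u'' x + u x ^ p * u' x / lam
              + C * (u' x * u' x / 2 + u x ^ (p + 1) / ((p + 1) * lam))) := by
          ring
        simp only [Pi.add_apply]
        rw [e4]
        exact mul_nonneg (le_of_lt hEx) hinner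
    have hGam : G a ≤ G m := hGmono haIam hmIam (le_of_lt ham)
    have hGa : G a = α * α / 2 := by
      rw [hGdef, hFdef]
      simp only
      rw [hua, hu'a, Real.zero_rpow hp1ne, sub_self, mul_zero, Real.exp_zero]
      ring
    have hGm : G m = F m * Real.exp (C * (ε / 2)) := by
      rw [hGdef]
      simp only
      rw [show m - a = ε / 2 from by rw [hmdef]; ring]
    rw [hGa, hGm] at hGam
    have hFm : α * α / 2 * Real.exp (-(C * ε) / 2) ≤ F m := by
      rw [show -(C * ε) / 2 = -(C * (ε / 2)) from by ring, Real.exp_neg,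
        ← div_eq_mul_inv, div_le_iff₀ (Real.exp_pos _)]
      exact hGam
    have hFmexp : F m = u' m * u' m / 2 + u m ^ (p + 1) / ((p + 1) * lam) := by rw [hFdef]
    rw [hFmexp] at hFm
    have humlb : c * (α * α) ≤ u m ^ (p + 1) := by
      have h1 : u' m * u' m ≤ (θ * α) * (θ * α) :=
        mul_le_mul hcase hcase hu'm_pos.le (by positivity)
      have hθsq : θ * θ ≤ Real.exp (-(C * ε) / 2) / 4 := by
        rw [hθdef]
        have h2 : Real.exp (-(C * ε)) * Real.exp (-(C * ε))
            = Real.exp (-(C * ε) + -(C * ε)) := (Real.exp_add _ _).symm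
        have h3 : Real.exp (-(C * ε) + -(C * ε)) ≤ Real.exp (-(C * ε) / 2) := by
          apply Real.exp_le_exp.2
          have := mul_pos hC0 hε
          linarith
        calc Real.exp (-(C * ε)) / 2 * (Real.exp (-(C * ε)) / 2)
            = Real.exp (-(C * ε) + -(C * ε)) / 4 := by rw [← h2]; ring
          _ ≤ Real.exp (-(C * ε) / 2) / 4 := by linarith
      have h4 : α * α / 2 * Real.exp (-(C * ε) / 2) - (θ * α) * (θ * α) / 2
          ≤ u m ^ (p + 1) / ((p + 1) * lam) := by linarith
      have h5 : c * (α * α) / ((p + 1) * lam)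
          ≤ α * α / 2 * Real.exp (-(C * ε) / 2) - (θ * α) * (θ * α) / 2 := by
        have e5 : c * (α * α) / ((p + 1) * lam)
            = 3 / 8 * Real.exp (-(C * ε) / 2) * (α * α) := by
          rw [hcdef]; field_simp
        have e6 : (θ * α) * (θ * α) = (θ * θ) * (α * α) := by ring
        have h7' : (θ * θ) * (α * α) ≤ Real.exp (-(C * ε) / 2) / 4 * (α * α) :=
          mul_le_mul_of_nonneg_right hθsq (by positivity)
        rw [e5, e6]
        linarith
      have h6 : c * (α * α) / ((p + 1) * lam) ≤ u m ^ (p + 1) / ((p + 1) * lam) :=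
        le_trans h5 h4
      calc c * (α * α) = c * (α * α) / ((p + 1) * lam) * ((p + 1) * lam) := by field_simp
        _ ≤ u m ^ (p + 1) / ((p + 1) * lam) * ((p + 1) * lam) :=
            mul_le_mul_of_nonneg_right h6 (by positivity)
        _ = u m ^ (p + 1) := by field_simp
    have hψanti : AntitoneOn (fun r => u' r + u m ^ p / Lam * (r - m)) (Icc m b) := by
      apply aux_antitone
      · exact (hcu'.mono hsubmb).add
          (continuous_const.mul (continuous_id.sub continuous_const)).continuousOn
      · intro x hx
        have hxb : x ∈ Ioo a b := ⟨lt_trans ham hx.1, hx.2⟩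
        have hxIb : x ∈ Icc a b := ⟨le_of_lt hxb.1, le_of_lt hx.2⟩
        refine ⟨u'' x + u m ^ p / Lam * 1, ?_,
          (hu' x (hsub hxIb)).add (((hasDerivAt_id x).sub_const m).const_mul _)⟩
        have hk1 := (hkey x hxb).1
        have hmono : u m ≤ u x := humono hmIb hxIb (le_of_lt hx.1)
        have h7 : u m ^ p ≤ u x ^ p := Real.rpow_le_rpow hum_pos.le hmono hp0.le
        have hdiv : u m ^ p / Lam ≤ u x ^ p / Lam := by gcongr
        rw [mul_one]
        linarith
    have hψ : u' b + u m ^ p / Lam * (b - m) ≤ u' m + u m ^ p / Lam * (m - m) :=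
      hψanti hmImb hbImb (le_of_lt hmb)
    have hKα : u m ^ p < K * α := by
      have e6 : u m ^ p / Lam * (b - m) = u m ^ p * (ε / 2) / Lam := by
        rw [show b - m = ε / 2 from by rw [hbdef, hmdef]; ring]; ring
      rw [e6, sub_self, mul_zero, add_zero] at hψ
      have h8 : u m ^ p * (ε / 2) / Lam < θ * α := by linarith
      rw [div_lt_iff₀ hLam] at h8
      have e7 : K * α = θ * α * Lam / (ε / 2) := by rw [hKdef]; field_simp
      rw [e7, lt_div_iff₀ (by linarith : (0:ℝ) < ε / 2)]
      linarith
    have hMp1 : u m ^ (p + 1) = u m ^ p * u m := by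
      rw [Real.rpow_add hum_pos, Real.rpow_one]
    have h7 : c * (α * α) < K * α * u m := by
      calc c * (α * α) ≤ u m ^ (p + 1) := humlb
        _ = u m ^ p * u m := hMp1
        _ < K * α * u m := mul_lt_mul_of_pos_right hKα hum_pos
    have hcKα : c / K * α < u m := by
      have e8 : c / K * α = c * (α * α) / (K * α) := by field_simp
      rw [e8, div_lt_iff₀ (by positivity)]
      linarith
    have h8 : (c / K * α) ^ p < u m ^ p :=
      Real.rpow_lt_rpow (by positivity) hcKα hp0
    have h9 : (c / K) ^ p * α ^ p < K * α := by
      rw [← Real.mul_rpow (by positivity) hα0.le]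
      exact lt_trans h8 hKα
    rw [hαp, ← mul_assoc] at h9
    have h10 : (c / K) ^ p * K₂ ≤ (c / K) ^ p * α ^ (p - 1) :=
      mul_le_mul_of_nonneg_left (le_trans (le_max_right K₁ K₂) hαpow) (by positivity)
    have h12 : (c / K) ^ p * K₂ * α < K * α :=
      lt_of_le_of_lt (mul_le_mul_of_nonneg_right h10 hα0.le) h9
    have h13 : (c / K) ^ p * K₂ < K := (mul_lt_mul_iff_left₀ hα0).1 h12
    have h14 : (c / K) ^ p * K₂ = K := by
      rw [hK2def, Real.div_rpow hc0.le hK0.le,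
        show K ^ (p + 1) = K ^ p * K from by rw [Real.rpow_add hK0, Real.rpow_one]]
      have hcp : c ^ p ≠ 0 := ne_of_gt (Real.rpow_pos_of_pos hc0 p)
      have hKp : K ^ p ≠ 0 := ne_of_gt (Real.rpow_pos_of_pos hK0 p)
      field_simp
    rw [h14] at h13
    exact lt_irrefl _ h13
  · -- Case A : θ * α < u' m
    have hlin : ∀ r ∈ Icc a m, θ * α * (r - a) ≤ u r := by
      have hmono2 : MonotoneOn (fun r => u r - θ * α * (r - a)) (Icc a m) := by
        apply aux_monotone
        · exact (hcu.mono hsubm).sub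
            (continuous_const.mul (continuous_id.sub continuous_const)).continuousOn
        · intro x hx
          have hxIb : x ∈ Icc a b := ⟨le_of_lt hx.1, le_of_lt (lt_trans hx.2 hmb)⟩
          refine ⟨u' x - θ * α * 1, ?_,
            (hu x (hsub hxIb)).sub (((hasDerivAt_id x).sub_const a).const_mul _)⟩
          have h1 : u' m ≤ u' x := hu'anti hxIb hmIb (le_of_lt hx.2)
          linarith
      intro r hr
      have h2 := hmono2 haIam hr hr.1
      simp only at h2
      rw [hua, sub_self, mul_zero, zero_sub] at h2
      linarith [h2]
    have hφanti : AntitoneOn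
        (fun r => u' r + (θ * α) ^ p / ((p + 1) * Lam) * (r - a) ^ (p + 1)) (Icc a m) := by
      apply aux_antitone
      · apply (hcu'.mono hsubm).add
        exact continuousOn_const.mul
          (((continuous_id.sub continuous_const).continuousOn).rpow_const
            (fun x hx => Or.inr (le_of_lt hp1)))
      · intro x hx
        have hxb : x ∈ Ioo a b := ⟨hx.1, lt_trans hx.2 hmb⟩
        have hxIb : x ∈ Icc a b := ⟨le_of_lt hx.1, le_of_lt hxb.2⟩
        have hxa : 0 < x - a := sub_pos.2 hx.1
        have hdpow : HasDerivAt (fun r : ℝ => (r - a) ^ (p + 1))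
            ((p + 1) * (x - a) ^ (p + 1 - 1) * 1) x :=
          by have h := (Real.hasDerivAt_rpow_const (x := x - a) (p := p + 1) (Or.inl (ne_of_gt hxa))).comp x
               ((hasDerivAt_id x).sub_const a)
             simpa [Function.comp_def] using h
        refine ⟨_, ?_, (hu' x (hsub hxIb)).add
          (hdpow.const_mul ((θ * α) ^ p / ((p + 1) * Lam)))⟩
        rw [show p + 1 - 1 = p from by ring]
        have hk1 := (hkey x hxb).1
        have hlx : θ * α * (x - a) ≤ u x := hlin x ⟨le_of_lt hx.1, le_of_lt hx.2⟩
        have h0le : 0 ≤ θ * α * (x - a) := by positivity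
        have hpow : (θ * α * (x - a)) ^ p ≤ u x ^ p :=
          Real.rpow_le_rpow h0le hlx hp0.le
        have hsplit : (θ * α * (x - a)) ^ p = (θ * α) ^ p * (x - a) ^ p :=
          Real.mul_rpow (by positivity) hxa.le
        have hcancel : (θ * α) ^ p / ((p + 1) * Lam) * ((p + 1) * (x - a) ^ p * 1)
            = (θ * α) ^ p * (x - a) ^ p / Lam := by
          field_simp
        rw [hcancel]
        have hdd : (θ * α) ^ p * (x - a) ^ p / Lam ≤ u x ^ p / Lam := by
          rw [← hsplit]; gcongr
        exact le_trans (add_le_add hk1 hdd) (le_of_eq (neg_add_cancel _))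
    have hφ : u' m + (θ * α) ^ p / ((p + 1) * Lam) * (m - a) ^ (p + 1)
        ≤ u' a + (θ * α) ^ p / ((p + 1) * Lam) * (a - a) ^ (p + 1) :=
      hφanti haIam hmIam (le_of_lt ham)
    rw [hu'a, sub_self, Real.zero_rpow hp1ne, mul_zero, add_zero,
      show m - a = ε / 2 from by rw [hmdef]; ring] at hφ
    have hθα : 0 < θ * α := mul_pos hθ0 hα0
    have h7 : (θ * α) ^ p / ((p + 1) * Lam) * (ε / 2) ^ (p + 1) < α := by
      linarith only [hφ, hcase, hθα]
    have h8 : θ ^ p * α ^ p * (ε / 2) ^ (p + 1) < α * ((p + 1) * Lam) := by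
      rw [Real.mul_rpow hθ0.le hα0.le] at h7
      rw [div_mul_eq_mul_div, div_lt_iff₀ (by positivity)] at h7
      linarith only [h7]
    have h9 : θ ^ p * (ε / 2) ^ (p + 1) * α ^ (p - 1) < (p + 1) * Lam := by
      rw [hαp] at h8
      have heq : θ ^ p * (α ^ (p - 1) * α) * (ε / 2) ^ (p + 1)
          = θ ^ p * (ε / 2) ^ (p + 1) * α ^ (p - 1) * α := by ring
      rw [heq, show α * ((p + 1) * Lam) = (p + 1) * Lam * α from by ring] at h8
      exact (mul_lt_mul_iff_left₀ hα0).1 h8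
    have h10 : α ^ (p - 1) < K₁ := by
      rw [hK1def, lt_div_iff₀ hden1]
      calc α ^ (p - 1) * (θ ^ p * (ε / 2) ^ (p + 1))
          = θ ^ p * (ε / 2) ^ (p + 1) * α ^ (p - 1) := by ring
        _ < (p + 1) * Lam := h9
    exact absurd (le_trans (le_max_left K₁ K₂) hαpow) (not_le.2 h10)
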